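/- arXiv:1808.10367 — 2 statements merged into one kernel-verified Lean document; each statement's English description precedes it below -/
import Mathlib

section
/- (Lemma 1 of the paper) Let u₁,…,uₙ be vectors in a real inner product space with Gram matrix G, let û = ∑ⱼ cᴸⱼ uⱼ and P = ∑ⱼ cᴴⱼ uⱼ with ‖cᴴ - cᴸ‖ ≤ ε, and let u ∈ H satisfy ‖u - P‖ ≤ δ ‖P - û‖ for some δ ≥ 0. Then ‖u - û‖ ≤ ε (1 + δ) √(σ_max(G)). -/
open Matrix
open scoped RealInnerProductSpace

/-- Rayleigh-type bound: quadratic form of a symmetric matrix is bounded by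
the largest eigenvalue times the squared norm. -/
lemma aux_rayleigh {n : ℕ} (G : Matrix (Fin n) (Fin n) ℝ) (hGsym : G.IsHermitian)
    (σmax : ℝ) (hσ : ∀ i, hGsym.eigenvalues i ≤ σmax)
    (x : EuclideanSpace ℝ (Fin n)) :
    ⟪x, Matrix.toEuclideanLin G x⟫ ≤ σmax * ‖x‖ ^ 2 := by
  have hsymm : (Matrix.toEuclideanLin G).IsSymmetric :=
    (Matrix.isHermitian_iff_isSymmetric).mp hGsym
  set b := hGsym.eigenvectorBasis
  have hb : ∀ i, Matrix.toEuclideanLin G (b i) = hGsym.eigenvalues i • b i := by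
    intro i
    have := hGsym.mulVec_eigenvectorBasis i
    rw [Matrix.toEuclideanLin_apply]
    ext j
    have hj := congrFun this j
    exact hj
  have expand : ⟪x, Matrix.toEuclideanLin G x⟫ =
      ∑ i, hGsym.eigenvalues i * (⟪b i, x⟫ * ⟪b i, x⟫) := by
    rw [← b.sum_inner_mul_inner x (Matrix.toEuclideanLin G x)]
    refine Finset.sum_congr rfl fun i _ => ?_
    have h1 : ⟪b i, Matrix.toEuclideanLin G x⟫ = hGsym.eigenvalues i * ⟪b i, x⟫ := by
      rw [← hsymm (b i) x, hb i, real_inner_smul_left]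
    rw [h1, real_inner_comm x (b i)]
    ring
  have norm_eq : ‖x‖ ^ 2 = ∑ i, ⟪b i, x⟫ * ⟪b i, x⟫ := by
    have := b.sum_inner_mul_inner x x
    rw [real_inner_self_eq_norm_sq] at this
    rw [← this]
    refine Finset.sum_congr rfl fun i _ => ?_
    rw [real_inner_comm x (b i)]
  rw [expand, norm_eq, Finset.mul_sum]
  refine Finset.sum_le_sum fun i _ => ?_
  exact mul_le_mul_of_nonneg_right (hσ i) (mul_self_nonneg _)

/-- Lemma 1: bi-fidelity displacement error bound
`‖u - û‖ ≤ ε (1 + δ) √(σ_max(G))`. -/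
theorem stmt_4 {H : Type*} [NormedAddCommGroup H] [InnerProductSpace ℝ H]
    {n : ℕ} (u : Fin n → H) (G : Matrix (Fin n) (Fin n) ℝ)
    (hG : ∀ i j, G i j = ⟪u i, u j⟫) (hGsym : G.IsHermitian)
    (σmax : ℝ) (hσ : IsGreatest (Set.range hGsym.eigenvalues) σmax)
    (cL cH : Fin n → ℝ) (ε δ : ℝ) (hε : 0 ≤ ε) (hδ : 0 ≤ δ)
    (hc : Real.sqrt (∑ i, (cH i - cL i) ^ 2) ≤ ε)
    (uH : H)
    (uhat P : H) (huhat : uhat = ∑ j, cL j • u j) (hP : P = ∑ j, cH j • u j)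
    (hd : ‖uH - P‖ ≤ δ * ‖P - uhat‖) :
    ‖uH - uhat‖ ≤ ε * (1 + δ) * Real.sqrt σmax := by
  -- the coefficient difference vector
  set d : EuclideanSpace ℝ (Fin n) := WithLp.toLp 2 (fun i => cH i - cL i) with hdvec
  -- σmax is nonnegative
  obtain ⟨⟨i0, hi0⟩, hub⟩ := hσ
  have hGps : G.PosSemidef := by
    rw [Matrix.posSemidef_iff_dotProduct_mulVec]
    constructor
    · exact hGsym
    · intro x
      have : star x ⬝ᵥ G *ᵥ x = ⟪∑ i, x i • u i, ∑ j, x j • u j⟫ := by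
        simp only [inner_sum, sum_inner, real_inner_smul_left, real_inner_smul_right,
          dotProduct, Matrix.mulVec, star_trivial]
        rw [Finset.sum_comm]
        refine Finset.sum_congr rfl fun i _ => ?_
        simp only [Finset.mul_sum, Finset.sum_mul]
        refine Finset.sum_congr rfl fun j _ => ?_
        rw [hG, real_inner_comm (u j) (u i)]
        ring
      rw [this]
      exact real_inner_self_nonneg
  have hσ0 : 0 ≤ σmax := by
    rw [← hi0]
    exact hGps.eigenvalues_nonneg i0
  -- ‖P - uhat‖² = d ⬝ G d
  have hPu : P - uhat = ∑ j, d j • u j := by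
    rw [hP, huhat, ← Finset.sum_sub_distrib]
    refine Finset.sum_congr rfl fun j _ => ?_
    rw [← sub_smul]
  have hquad : ‖P - uhat‖ ^ 2 = ⟪d, Matrix.toEuclideanLin G d⟫ := by
    rw [← real_inner_self_eq_norm_sq, hPu]
    rw [Matrix.toEuclideanLin_apply]
    simp only [inner_sum, sum_inner, real_inner_smul_left, real_inner_smul_right]
    have hinner : ⟪d, WithLp.toLp 2 (G *ᵥ d.ofLp)⟫
        = ∑ i, d i * (G *ᵥ (fun j => d j)) i := by
      simp only [PiLp.inner_apply, RCLike.inner_apply, conj_trivial, WithLp.ofLp_toLp]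
      exact Finset.sum_congr rfl fun i _ => by ring
    rw [hinner]
    refine Finset.sum_congr rfl fun i _ => ?_
    simp only [Matrix.mulVec, dotProduct, Finset.mul_sum]
    refine Finset.sum_congr rfl fun j _ => ?_
    rw [hG, real_inner_comm (u j) (u i)]
    ring
  -- bound ‖P - uhat‖ ≤ ε √σmax
  have hdnorm : ‖d‖ ≤ ε := by
    rw [EuclideanSpace.norm_eq]
    refine le_trans (le_of_eq ?_) hc
    congr 1
    exact Finset.sum_congr rfl fun i _ => by rw [Real.norm_eq_abs, sq_abs]
  have hray := aux_rayleigh G hGsym σmax (fun i => hub ⟨i, rfl⟩) d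
  have hPub : ‖P - uhat‖ ≤ ε * Real.sqrt σmax := by
    have h1 : ‖P - uhat‖ ^ 2 ≤ σmax * ε ^ 2 := by
      rw [hquad]
      refine hray.trans ?_
      have : ‖d‖ ^ 2 ≤ ε ^ 2 := by
        apply pow_le_pow_left₀ (norm_nonneg _) hdnorm
      nlinarith
    have h2 : ‖P - uhat‖ ^ 2 ≤ (ε * Real.sqrt σmax) ^ 2 := by
      rw [mul_pow, Real.sq_sqrt hσ0]
      linarith
    have h3 := Real.sqrt_le_sqrt h2
    rwa [Real.sqrt_sq (norm_nonneg _), Real.sqrt_sq (by positivity)] at h3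
  -- triangle inequality
  calc ‖uH - uhat‖ = ‖(uH - P) + (P - uhat)‖ := by rw [sub_add_sub_cancel]
    _ ≤ ‖uH - P‖ + ‖P - uhat‖ := norm_add_le _ _
    _ ≤ δ * ‖P - uhat‖ + ‖P - uhat‖ := by linarith
    _ = (1 + δ) * ‖P - uhat‖ := by ring
    _ ≤ (1 + δ) * (ε * Real.sqrt σmax) := by
        apply mul_le_mul_of_nonneg_left hPub (by linarith)
    _ = ε * (1 + δ) * Real.sqrt σmax := by ring
end

section
/- (Proposition 1, compliance part) Let K be a real symmetric n×n matrix, let u₁,…,uₙ ∈ ℝᵐ have Gram matrix G, let û = ∑ⱼ cᴸⱼ uⱼ, P = ∑ⱼ cᴴⱼ uⱼ with ‖cᴴ - cᴸ‖ ≤ ε, and let u satisfy ‖u - P‖ ≤ δ‖P - û‖. Define C = uᵀ K u, Ĉ = ûᵀ K û. Then |C - Ĉ| ≤ A · σ_max(K), where A = ε(1 + δ) σ_max(G) [2‖cᴸ‖ + ε(1 + δ)]. -/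
open Matrix
open scoped Matrix.Norms.L2Operator

open scoped InnerProductSpace

lemma dot_sum_smul {n k : ℕ} (x : Fin n → ℝ) (a : Fin k → ℝ) (w : Fin k → Fin n → ℝ) :
    x ⬝ᵥ (∑ j, a j • w j) = ∑ j, a j * (x ⬝ᵥ w j) := by
  simp only [dotProduct, Finset.sum_apply, Pi.smul_apply, smul_eq_mul, Finset.mul_sum]
  rw [Finset.sum_comm]
  exact Finset.sum_congr rfl fun j _ => Finset.sum_congr rfl fun k _ => by ring

lemma quad_bound {n : ℕ} (G : Matrix (Fin n) (Fin n) ℝ) (hGsym : G.IsHermitian)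
    (σ : ℝ) (hσ : ∀ i, hGsym.eigenvalues i ≤ σ) (x : Fin n → ℝ) :
    x ⬝ᵥ G.mulVec x ≤ σ * ∑ i, x i ^ 2 := by
  classical
  set B := hGsym.eigenvectorBasis with hB
  set lam := hGsym.eigenvalues with hlam
  set c : Fin n → ℝ := fun i => ⟪B i, (WithLp.toLp 2 x : EuclideanSpace ℝ (Fin n))⟫_ℝ with hc
  have hrepr : x = ∑ i, c i • (B i : Fin n → ℝ) := by
    funext k
    have h1 := B.sum_repr' (WithLp.toLp 2 x : EuclideanSpace ℝ (Fin n))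
    have h2 := congrFun (congrArg (fun (v : EuclideanSpace ℝ (Fin n)) => (v : Fin n → ℝ)) h1) k
    rw [Finset.sum_apply]
    exact (h2.symm.trans (by simp [hc, Finset.sum_apply]))
  have hdot : ∀ j, x ⬝ᵥ (B j : Fin n → ℝ) = c j := by
    intro j
    simp only [hc, PiLp.inner_apply, RCLike.inner_apply, starRingEnd_apply, star_trivial,
      dotProduct]
  have hGx : G.mulVec x = ∑ j, (c j * lam j) • (B j : Fin n → ℝ) := by
    have h1 : G.mulVec x = G.mulVecLin (∑ i, c i • (B i : Fin n → ℝ)) := by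
      rw [Matrix.mulVecLin_apply, ← hrepr]
    rw [h1, map_sum]
    refine Finset.sum_congr rfl fun j _ => ?_
    rw [_root_.map_smul, Matrix.mulVecLin_apply,
      show G *ᵥ (B j : Fin n → ℝ) = lam j • (B j : Fin n → ℝ) from hGsym.mulVec_eigenvectorBasis j,
      smul_smul, mul_comm]
  have key : x ⬝ᵥ G.mulVec x = ∑ j, lam j * c j ^ 2 := by
    rw [hGx, dot_sum_smul]
    exact Finset.sum_congr rfl fun j _ => by rw [hdot]; ring
  have key2 : ∑ i, x i ^ 2 = ∑ j, c j ^ 2 := by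
    have h0 : ∑ i, x i ^ 2 = x ⬝ᵥ x := by
      simp [dotProduct, pow_two]
    rw [h0]
    conv_lhs => rw [show (x ⬝ᵥ x) = x ⬝ᵥ ∑ i, c i • (B i : Fin n → ℝ) by rw [← hrepr]]
    rw [dot_sum_smul]
    exact Finset.sum_congr rfl fun j _ => by rw [hdot]; ring
  rw [key, key2, Finset.mul_sum]
  exact Finset.sum_le_sum fun j _ => mul_le_mul_of_nonneg_right (hσ j) (sq_nonneg _)

lemma norm_eq_sqrt_sum {m : ℕ} (v : Fin m → ℝ) :
    ‖(WithLp.equiv 2 (Fin m → ℝ)).symm v‖ = Real.sqrt (∑ i, v i ^ 2) := by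
  rw [EuclideanSpace.norm_eq]
  congr 1
  exact Finset.sum_congr rfl fun i _ => by
    rw [show ((WithLp.equiv 2 (Fin m → ℝ)).symm v) i = v i from rfl, Real.norm_eq_abs, sq_abs]

lemma dot_bound {m : ℕ} (A : Matrix (Fin m) (Fin m) ℝ) (x y : Fin m → ℝ) :
    |x ⬝ᵥ A.mulVec y| ≤ ‖A‖ * (‖(WithLp.equiv 2 (Fin m → ℝ)).symm x‖ *
      ‖(WithLp.equiv 2 (Fin m → ℝ)).symm y‖) := by
  set ex := (WithLp.equiv 2 (Fin m → ℝ)).symm x with hex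
  set ey := (WithLp.equiv 2 (Fin m → ℝ)).symm y with hey
  set ez := (WithLp.equiv 2 (Fin m → ℝ)).symm (A.mulVec y) with hez
  have h1 : x ⬝ᵥ A.mulVec y = ⟪ex, ez⟫_ℝ := by
    simp only [PiLp.inner_apply, RCLike.inner_apply, starRingEnd_apply, star_trivial, dotProduct]
    exact Finset.sum_congr rfl fun i _ => mul_comm _ _
  rw [h1]
  refine (abs_real_inner_le_norm ex ez).trans ?_
  have h2 : ‖ez‖ ≤ ‖A‖ * ‖ey‖ := A.l2_opNorm_mulVec ey
  calc ‖ex‖ * ‖ez‖ ≤ ‖ex‖ * (‖A‖ * ‖ey‖) :=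
        mul_le_mul_of_nonneg_left h2 (norm_nonneg _)
    _ = ‖A‖ * (‖ex‖ * ‖ey‖) := by ring

lemma gram_expand {m n : ℕ} (u : Fin n → Fin m → ℝ)
    (G : Matrix (Fin n) (Fin n) ℝ) (hG : ∀ i j, G i j = u i ⬝ᵥ u j) (c : Fin n → ℝ) :
    ∑ k, ((∑ j, c j • u j) k) ^ 2 = c ⬝ᵥ G.mulVec c := by
  have lhs : ∑ k, ((∑ j, c j • u j) k) ^ 2
      = ∑ k, ∑ j, ∑ i, (c j * u j k) * (c i * u i k) := by
    refine Finset.sum_congr rfl fun k _ => ?_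
    rw [Finset.sum_apply, pow_two, Finset.sum_mul_sum]
    simp [Pi.smul_apply, smul_eq_mul]
  rw [lhs, Finset.sum_comm]
  simp only [Matrix.mulVec, dotProduct]
  refine Finset.sum_congr rfl fun j _ => ?_
  rw [Finset.sum_comm, Finset.mul_sum]
  refine Finset.sum_congr rfl fun i _ => ?_
  rw [hG, dotProduct, Finset.sum_mul, Finset.mul_sum]
  exact Finset.sum_congr rfl fun k _ => by ring

/-- Proposition 1 (compliance part): with `A = ε(1+δ)σ_max(G)[2‖cᴸ‖ + ε(1+δ)]`,
`|C - Ĉ| ≤ A σ_max(K)`. -/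
theorem stmt_8 {m n : ℕ} (K : Matrix (Fin m) (Fin m) ℝ) (hK : K.IsHermitian)
    (u : Fin n → Fin m → ℝ)
    (G : Matrix (Fin n) (Fin n) ℝ) (hG : ∀ i j, G i j = u i ⬝ᵥ u j)
    (hGsym : G.IsHermitian)
    (σmaxG : ℝ) (hσ : IsGreatest (Set.range hGsym.eigenvalues) σmaxG)
    (cL cH : Fin n → ℝ) (ε δ : ℝ) (hε : 0 ≤ ε) (hδ : 0 ≤ δ)
    (hc : Real.sqrt (∑ i, (cH i - cL i) ^ 2) ≤ ε)
    (uH : Fin m → ℝ)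
    (uhat P : Fin m → ℝ) (huhat : uhat = ∑ j, cL j • u j)
    (hP : P = ∑ j, cH j • u j)
    (hd : Real.sqrt (∑ i, (uH i - P i) ^ 2) ≤
      δ * Real.sqrt (∑ i, (P i - uhat i) ^ 2)) :
    |uH ⬝ᵥ K.mulVec uH - uhat ⬝ᵥ K.mulVec uhat| ≤
      (ε * (1 + δ) * σmaxG * (2 * Real.sqrt (∑ j, cL j ^ 2) + ε * (1 + δ))) *
        ‖K‖ := by
  classical
  -- σmaxG is nonneg and bounds all eigenvalues
  have hσub : ∀ i, hGsym.eigenvalues i ≤ σmaxG := fun i => hσ.2 ⟨i, rfl⟩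
  have hpsd : G.PosSemidef := by
    have hGeq : G = (Matrix.of u) * (Matrix.of u)ᴴ := by
      ext i j
      simp [hG, Matrix.mul_apply, dotProduct]
    rw [hGeq]
    exact posSemidef_self_mul_conjTranspose _
  have hσ0 : 0 ≤ σmaxG := by
    obtain ⟨i, hi⟩ := hσ.1
    exact hi ▸ hpsd.eigenvalues_nonneg i
  set s := Real.sqrt σmaxG with hs
  have hss : s * s = σmaxG := Real.mul_self_sqrt hσ0
  have hs0 : 0 ≤ s := Real.sqrt_nonneg _
  -- norm notation
  set N : (Fin m → ℝ) → ℝ := fun v => ‖(WithLp.equiv 2 (Fin m → ℝ)).symm v‖ with hN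
  have hNeq : ∀ v, N v = Real.sqrt (∑ i, v i ^ 2) := fun v => norm_eq_sqrt_sum v
  have hNnn : ∀ v, 0 ≤ N v := fun v => norm_nonneg _
  set ncl := Real.sqrt (∑ j, cL j ^ 2) with hncl
  have hncl0 : 0 ≤ ncl := Real.sqrt_nonneg _
  -- bound on ‖uhat‖
  have huhatN : N uhat ≤ s * ncl := by
    have h1 : ∑ k, uhat k ^ 2 = cL ⬝ᵥ G.mulVec cL := by
      rw [huhat]; exact gram_expand u G hG cL
    have h2 : cL ⬝ᵥ G.mulVec cL ≤ σmaxG * ∑ j, cL j ^ 2 := quad_bound G hGsym σmaxG hσub cL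
    have h3 : N uhat ≤ Real.sqrt (σmaxG * ∑ j, cL j ^ 2) := by
      rw [hNeq]; exact Real.sqrt_le_sqrt (by linarith)
    calc N uhat ≤ Real.sqrt (σmaxG * ∑ j, cL j ^ 2) := h3
      _ = s * ncl := by rw [Real.sqrt_mul hσ0]
  -- bound on ‖P - uhat‖
  have hPuhat : N (fun k => P k - uhat k) ≤ s * ε := by
    have hsub : (fun k => P k - uhat k) = ∑ j, (cH j - cL j) • u j := by
      funext k
      rw [hP, huhat, Finset.sum_apply, Finset.sum_apply, Finset.sum_apply, ← Finset.sum_sub_distrib]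
      exact Finset.sum_congr rfl fun j _ => by simp [sub_mul]
    have h1 : ∑ k, (P k - uhat k) ^ 2 = (fun j => cH j - cL j) ⬝ᵥ G.mulVec (fun j => cH j - cL j) := by
      have := gram_expand u G hG (fun j => cH j - cL j)
      rw [← this, ← hsub]
    have h2 := quad_bound G hGsym σmaxG hσub (fun j => cH j - cL j)
    have h3 : ∑ j, (cH j - cL j) ^ 2 ≤ ε ^ 2 := by
      have hsq := Real.sq_sqrt (show (0:ℝ) ≤ ∑ i, (cH i - cL i) ^ 2 from
        Finset.sum_nonneg fun j _ => sq_nonneg _)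
      nlinarith [Real.sqrt_nonneg (∑ i, (cH i - cL i) ^ 2)]
    have h4 : ∑ k, (P k - uhat k) ^ 2 ≤ σmaxG * ε ^ 2 := by
      rw [h1]
      calc _ ≤ σmaxG * ∑ j, (cH j - cL j) ^ 2 := h2
        _ ≤ σmaxG * ε ^ 2 := mul_le_mul_of_nonneg_left h3 hσ0
    rw [hNeq]
    calc Real.sqrt (∑ k, (P k - uhat k) ^ 2) ≤ Real.sqrt (σmaxG * ε ^ 2) :=
          Real.sqrt_le_sqrt h4
      _ = s * ε := by
          rw [Real.sqrt_mul hσ0, Real.sqrt_sq hε]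
  -- error vector
  set e := fun k => uH k - uhat k with he
  have hE : N e ≤ ε * (1 + δ) * s := by
    have htri : N e ≤ N (fun k => uH k - P k) + N (fun k => P k - uhat k) := by
      have heq : (WithLp.equiv 2 (Fin m → ℝ)).symm e =
          (WithLp.equiv 2 (Fin m → ℝ)).symm (fun k => uH k - P k) +
          (WithLp.equiv 2 (Fin m → ℝ)).symm (fun k => P k - uhat k) := by
        ext k; show uH k - uhat k = (uH k - P k) + (P k - uhat k); ring
      show ‖(WithLp.equiv 2 (Fin m → ℝ)).symm e‖ ≤
        ‖(WithLp.equiv 2 (Fin m → ℝ)).symm (fun k => uH k - P k)‖ +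
        ‖(WithLp.equiv 2 (Fin m → ℝ)).symm (fun k => P k - uhat k)‖
      rw [heq]; exact norm_add_le _ _
    have hd' : N (fun k => uH k - P k) ≤ δ * N (fun k => P k - uhat k) := by
      rw [hNeq, hNeq]; exact hd
    have hPu0 : 0 ≤ N (fun k => P k - uhat k) := hNnn _
    calc N e ≤ (1 + δ) * N (fun k => P k - uhat k) := by linarith
      _ ≤ (1 + δ) * (s * ε) := mul_le_mul_of_nonneg_left hPuhat (by linarith)
      _ = ε * (1 + δ) * s := by ring
  have hE0 : 0 ≤ N e := hNnn _
  -- splitting the difference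
  have hsplit : uH ⬝ᵥ K.mulVec uH - uhat ⬝ᵥ K.mulVec uhat =
      e ⬝ᵥ K.mulVec uH + uhat ⬝ᵥ K.mulVec e := by
    have h1 : e ⬝ᵥ K.mulVec uH = uH ⬝ᵥ K.mulVec uH - uhat ⬝ᵥ K.mulVec uH := by
      rw [show e = uH - uhat from rfl, sub_dotProduct]
    have h2 : uhat ⬝ᵥ K.mulVec e = uhat ⬝ᵥ K.mulVec uH - uhat ⬝ᵥ K.mulVec uhat := by
      rw [show e = uH - uhat from rfl, Matrix.mulVec_sub, dotProduct_sub]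
    rw [h1, h2]; ring
  have hb1 := dot_bound K e uH
  have hb2 := dot_bound K uhat e
  have hK0 : (0:ℝ) ≤ ‖K‖ := norm_nonneg _
  have habs : |uH ⬝ᵥ K.mulVec uH - uhat ⬝ᵥ K.mulVec uhat| ≤
      ‖K‖ * (N e * N uH) + ‖K‖ * (N uhat * N e) := by
    rw [hsplit]
    refine (abs_add_le _ _).trans ?_
    exact add_le_add hb1 hb2
  -- bound N uH
  have huHN : N uH ≤ N uhat + N e := by
    have heq : (WithLp.equiv 2 (Fin m → ℝ)).symm uH =
        (WithLp.equiv 2 (Fin m → ℝ)).symm uhat + (WithLp.equiv 2 (Fin m → ℝ)).symm e := by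
      ext k; show uH k = uhat k + (uH k - uhat k); ring
    show ‖(WithLp.equiv 2 (Fin m → ℝ)).symm uH‖ ≤
      ‖(WithLp.equiv 2 (Fin m → ℝ)).symm uhat‖ + ‖(WithLp.equiv 2 (Fin m → ℝ)).symm e‖
    rw [heq]; exact norm_add_le _ _
  have hNuhat0 : 0 ≤ N uhat := hNnn _
  -- final arithmetic
  have hfin : N e * N uH + N uhat * N e ≤
      ε * (1 + δ) * σmaxG * (2 * ncl + ε * (1 + δ)) := by
    have step1 : N e * N uH + N uhat * N e ≤ N e * (2 * N uhat + N e) := by nlinarith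
    have step2 : N e * (2 * N uhat + N e) ≤
        (ε * (1 + δ) * s) * (2 * (s * ncl) + ε * (1 + δ) * s) := by
      refine mul_le_mul hE ?_ (by linarith) (by positivity)
      linarith
    have step3 : (ε * (1 + δ) * s) * (2 * (s * ncl) + ε * (1 + δ) * s) =
        ε * (1 + δ) * σmaxG * (2 * ncl + ε * (1 + δ)) := by
      rw [← hss]; ring
    linarith
  calc |uH ⬝ᵥ K.mulVec uH - uhat ⬝ᵥ K.mulVec uhat|
      ≤ ‖K‖ * (N e * N uH) + ‖K‖ * (N uhat * N e) := habs
    _ = ‖K‖ * (N e * N uH + N uhat * N e) := by ring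
    _ ≤ ‖K‖ * (ε * (1 + δ) * σmaxG * (2 * ncl + ε * (1 + δ))) :=
        mul_le_mul_of_nonneg_left hfin hK0
    _ = (ε * (1 + δ) * σmaxG * (2 * ncl + ε * (1 + δ))) * ‖K‖ := by ring
end
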